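/- Let (a,b) be a fictitious-play trajectory. Then for every T ≥ 5, Bob's total payoff satisfies T/2 − √(10T) ≤ Σ_{t=1}^T u_B^t ≤ T/2 + √(10T). -/
import Mathlib


open MeasureTheory

/-- Bob's choice of the left or right piece. -/
inductive Choice
  | L
  | R
deriving DecidableEq

/-- The cumulative valuation `V(x) = ∫_0^x v`. -/
noncomputable def cumul (v : ℝ → ℝ) (x : ℝ) : ℝ := ∫ y in (0:ℝ)..x, v y

/-- `v` is an integrable value density on `[0,1]`, bounded between `lo` and `hi`,
integrating to `1`. -/
def IsDensity (lo hi : ℝ) (v : ℝ → ℝ) : Prop :=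
  IntervalIntegrable v volume 0 1 ∧
  (∀ x ∈ Set.Icc (0:ℝ) 1, lo ≤ v x ∧ v x ≤ hi) ∧
  (∫ y in (0:ℝ)..1, v y) = 1

/-- Alice's round-`t` utility: if Bob picks `L` she gets `[a_t,1]`, else `[0,a_t]`. -/
noncomputable def uA (vA : ℝ → ℝ) (a : ℕ → ℝ) (b : ℕ → Choice) (t : ℕ) : ℝ :=
  if b t = Choice.L then 1 - cumul vA (a t) else cumul vA (a t)

/-- Bob's round-`t` utility: if he picks `L` he gets `[0,a_t]`, else `[a_t,1]`. -/
noncomputable def uB (vB : ℝ → ℝ) (a : ℕ → ℝ) (b : ℕ → Choice) (t : ℕ) : ℝ :=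
  if b t = Choice.L then cumul vB (a t) else 1 - cumul vB (a t)

/-- `α_t = r_t − ℓ_t`: number of `R` choices minus number of `L` choices up to round `t`. -/
noncomputable def alphaFP (b : ℕ → Choice) (t : ℕ) : ℝ :=
  ∑ i ∈ Finset.Icc 1 t, (if b i = Choice.R then (1:ℝ) else -1)

/-- `β_t = Σ_{i=1}^t (2 V_B(a_i) − 1)`. -/
noncomputable def betaFP (vB : ℝ → ℝ) (a : ℕ → ℝ) (t : ℕ) : ℝ :=
  ∑ i ∈ Finset.Icc 1 t, (2 * cumul vB (a i) - 1)

/-- The radius `ρ_t = |α_t| + |β_t|`. -/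
noncomputable def rhoFP (vB : ℝ → ℝ) (a : ℕ → ℝ) (b : ℕ → Choice) (t : ℕ) : ℝ :=
  |alphaFP b t| + |betaFP vB a t|

/-- `(a,b)` is a fictitious-play trajectory. -/
def IsFictitiousPlay (vB : ℝ → ℝ) (a : ℕ → ℝ) (b : ℕ → Choice) : Prop :=
  ∀ t : ℕ,
    (0 < alphaFP b t → a (t+1) = 1) ∧
    (alphaFP b t < 0 → a (t+1) = 0) ∧
    (0 < betaFP vB a t → b (t+1) = Choice.L) ∧
    (betaFP vB a t < 0 → b (t+1) = Choice.R)

/-- Round `t` is axis-crossing. -/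
def AxisCrossing (vB : ℝ → ℝ) (a : ℕ → ℝ) (b : ℕ → Choice) (t : ℕ) : Prop :=
  alphaFP b t = 0 ∨
  (betaFP vB a t ≤ 0 ∧ 0 < betaFP vB a (t+1)) ∨
  (0 ≤ betaFP vB a t ∧ betaFP vB a (t+1) < 0)

namespace FPaux


/-- Abstract fictitious-play system. -/
structure Sys (A B : ℕ → ℝ) : Prop where
  a0 : A 0 = 0
  b0 : B 0 = 0
  ad : ∀ t, A (t+1) = A t + 1 ∨ A (t+1) = A t - 1
  bd : ∀ t, |B (t+1) - B t| ≤ 1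
  c1 : ∀ t, 0 < A t → B (t+1) - B t = 1
  c2 : ∀ t, A t < 0 → B (t+1) - B t = -1
  c3 : ∀ t, 0 < B t → A (t+1) = A t - 1
  c4 : ∀ t, B t < 0 → A (t+1) = A t + 1

/-- radius -/
noncomputable def rad (A B : ℕ → ℝ) (t : ℕ) : ℝ := |A t| + |B t|

/-- exceptional step -/
def Yx (B : ℕ → ℝ) (t : ℕ) : Prop := B t * B (t+1) ≤ 0 ∧ B (t+1) ≠ 0

variable {A B : ℕ → ℝ}

lemma rad_nonneg (t : ℕ) : 0 ≤ rad A B t :=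
  add_nonneg (abs_nonneg _) (abs_nonneg _)

lemma intA (h : Sys A B) : ∀ t, ∃ k : ℤ, A t = k := by
  intro t
  induction t with
  | zero => exact ⟨0, by simp [h.a0]⟩
  | succ t ih =>
    obtain ⟨k, hk⟩ := ih
    rcases h.ad t with h' | h'
    · exact ⟨k + 1, by rw [h', hk]; push_cast; ring⟩
    · exact ⟨k - 1, by rw [h', hk]; push_cast; ring⟩

lemma A_one_le (h : Sys A B) {t : ℕ} (ht : 0 < A t) : 1 ≤ A t := by
  obtain ⟨k, hk⟩ := intA h t
  rw [hk] at ht ⊢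
  exact_mod_cast Int.cast_pos.mp ht

lemma A_le_neg_one (h : Sys A B) {t : ℕ} (ht : A t < 0) : A t ≤ -1 := by
  obtain ⟨k, hk⟩ := intA h t
  have hk0 : k < 0 := by exact_mod_cast hk ▸ ht
  have hk1 : k ≤ -1 := by omega
  rw [hk]
  exact_mod_cast hk1

lemma absA_succ (h : Sys A B) (t : ℕ) : |A (t+1)| ≤ |A t| + 1 := by
  rcases h.ad t with h' | h' <;> rw [h']
  · refine (abs_add_le _ _).trans ?_; norm_num
  · rw [sub_eq_add_neg]; refine (abs_add_le _ _).trans ?_; norm_num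

lemma absB_succ (h : Sys A B) (t : ℕ) : |B (t+1)| ≤ |B t| + 1 := by
  have h1 : B (t+1) = B t + (B (t+1) - B t) := by ring
  rw [h1]
  exact (abs_add_le _ _).trans (by linarith [h.bd t])

lemma absAd_eq_one (h : Sys A B) (t : ℕ) : |A (t+1) - A t| = 1 := by
  rcases h.ad t with h' | h' <;> rw [h'] <;> simp

/-- general step: radius grows by at most 2 -/
lemma GS (h : Sys A B) (t : ℕ) : rad A B (t+1) ≤ rad A B t + 2 := by
  have := absA_succ h t
  have := absB_succ h t
  unfold rad at *
  linarith

lemma sgn_pos {ε x y : ℝ} (hε : ε = 1 ∨ ε = -1) (hx : 0 < ε * x) (hxy : 0 < x * y) :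
    0 < ε * y := by
  by_contra hc
  push_neg at hc
  have h2 : (ε * x) * (ε * y) ≤ 0 := mul_nonpos_of_nonneg_of_nonpos hx.le hc
  have h3 : (ε * x) * (ε * y) = (ε * ε) * (x * y) := by ring
  rcases hε with rfl | rfl <;> rw [h3] at h2 <;> nlinarith

lemma sgn_nonpos {ε x y : ℝ} (hε : ε = 1 ∨ ε = -1) (hy : 0 < ε * y) (hxy : x * y ≤ 0) :
    ε * x ≤ 0 := by
  by_contra hc
  push_neg at hc
  have h2 : 0 < (ε * x) * (ε * y) := mul_pos hc hy
  have h3 : (ε * x) * (ε * y) = (ε * ε) * (x * y) := by ring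
  rcases hε with rfl | rfl <;> rw [h3] at h2 <;> nlinarith

/-- step of A determined by sign of B -/
lemma sA (h : Sys A B) {ε : ℝ} (hε : ε = 1 ∨ ε = -1) {t : ℕ} (hb : 0 < ε * B t) :
    A (t+1) = A t - ε := by
  rcases hε with rfl | rfl
  · exact h.c3 t (by linarith)
  · rw [h.c4 t (by nlinarith)]; ring

/-- step of B determined by sign of A -/
lemma cA (h : Sys A B) {ε : ℝ} (hε : ε = 1 ∨ ε = -1) {t : ℕ} (ha : 0 < ε * A t) :
    B (t+1) - B t = ε := by
  rcases hε with rfl | rfl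
  · exact h.c1 t (by linarith)
  · exact h.c2 t (by nlinarith)

lemma cA' (h : Sys A B) {ε : ℝ} (hε : ε = 1 ∨ ε = -1) {t : ℕ}
    (hc : ε * (B (t+1) - B t) < 0) : ε * A t ≤ 0 := by
  by_contra hcon
  push_neg at hcon
  rw [cA h hε hcon] at hc
  rcases hε with rfl | rfl <;> nlinarith

/-- flat step: away from both axes, the radius is non-increasing -/
lemma FS (h : Sys A B) {ε : ℝ} (hε : ε = 1 ∨ ε = -1) {t : ℕ}
    (h1 : 0 < ε * B t) (h2 : 0 ≤ ε * B (t+1)) (h3 : A t ≠ 0) :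
    rad A B (t+1) ≤ rad A B t := by
  have hstep : A (t+1) = A t - ε := sA h hε h1
  rcases lt_or_gt_of_ne h3 with hA | hA
  · have hA1 : A t ≤ -1 := A_le_neg_one h hA
    have hc : B (t+1) - B t = -1 := h.c2 t hA
    rcases hε with rfl | rfl <;> unfold rad
    · rw [abs_of_nonneg (by linarith : (0:ℝ) ≤ B (t+1)),
        abs_of_pos (by linarith : (0:ℝ) < B t),
        abs_of_nonpos (by linarith : A (t+1) ≤ 0),
        abs_of_nonpos (by linarith : A t ≤ 0)]
      linarith
    · rw [abs_of_nonpos (by linarith : B (t+1) ≤ 0),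
        abs_of_neg (by linarith : B t < 0),
        abs_of_nonpos (by rw [hstep]; linarith : A (t+1) ≤ 0),
        abs_of_nonpos (by linarith : A t ≤ 0)]
      rw [hstep]; linarith
  · have hA1 : 1 ≤ A t := A_one_le h hA
    have hc : B (t+1) - B t = 1 := h.c1 t hA
    rcases hε with rfl | rfl <;> unfold rad
    · rw [abs_of_nonneg (by linarith : (0:ℝ) ≤ B (t+1)),
        abs_of_pos (by linarith : (0:ℝ) < B t),
        abs_of_nonneg (by rw [hstep]; linarith : 0 ≤ A (t+1)),
        abs_of_nonneg (by linarith : 0 ≤ A t)]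
      rw [hstep]; linarith
    · rw [abs_of_nonpos (by linarith : B (t+1) ≤ 0),
        abs_of_neg (by linarith : B t < 0),
        abs_of_nonneg (by rw [hstep]; linarith : 0 ≤ A (t+1)),
        abs_of_nonneg (by linarith : 0 ≤ A t)]
      rw [hstep]; linarith

-- PART 2

/-- run with no zeros of A and strictly signed B: radius non-increasing -/
lemma NZrun (h : Sys A B) {ε : ℝ} (hε : ε = 1 ∨ ε = -1) (v : ℕ) :
    ∀ u, v ≤ u →
      (∀ w, v ≤ w → w < u → (0 < ε * B w ∧ A w ≠ 0)) →
      0 ≤ ε * B u →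
      rad A B u ≤ rad A B v := by
  intro u hu
  induction u, hu using Nat.le_induction with
  | base => intro _ _; exact le_rfl
  | succ u hu ih =>
    intro hyp1 hyp2
    have h1 : 0 < ε * B u := (hyp1 u hu (by omega)).1
    have h3 : A u ≠ 0 := (hyp1 u hu (by omega)).2
    have hFS : rad A B (u+1) ≤ rad A B u := FS h hε h1 hyp2 h3
    have hih : rad A B u ≤ rad A B v :=
      ih (fun w hw hwu => hyp1 w hw (by omega)) h1.le
    linarith

/-- A is linear on strictly-signed intervals -/
lemma linA (h : Sys A B) {ε : ℝ} (hε : ε = 1 ∨ ε = -1) (p : ℕ) :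
    ∀ u, p ≤ u → (∀ w, p ≤ w → w < u → 0 < ε * B w) →
      ε * A u = ε * A p - ((u : ℝ) - (p : ℝ)) := by
  intro u hu
  induction u, hu using Nat.le_induction with
  | base => intro _; simp
  | succ u hu ih =>
    intro hyp
    have hstep : A (u+1) = A u - ε := sA h hε (hyp u hu (by omega))
    have hih := ih (fun w hw hwu => hyp w hw (by omega))
    have heps : ε * ε = 1 := by rcases hε with rfl | rfl <;> norm_num
    rw [hstep]
    push_cast
    nlinarith [hih]

/-- strictly-signed phase: radius grows at most 2 -/
lemma PL1 (h : Sys A B) {ε : ℝ} (hε : ε = 1 ∨ ε = -1) (p m : ℕ)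
    (hs : ∀ w, p ≤ w → w < m → 0 < ε * B w) (hs' : 0 ≤ ε * B m) :
    ∀ u, p ≤ u → u ≤ m → rad A B u ≤ rad A B p + 2 := by
  classical
  have hs'' : ∀ w, p ≤ w → w ≤ m → 0 ≤ ε * B w := by
    intro w hw hwm
    rcases eq_or_lt_of_le hwm with rfl | hlt
    · exact hs'
    · exact (hs w hw hlt).le
  intro u hpu hum
  by_cases hz : ∃ w, p ≤ w ∧ w < u ∧ A w = 0
  · set w₀ := Nat.find hz with hw₀def
    obtain ⟨hw1, hw2, hw3⟩ := Nat.find_spec hz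
    have hmin : ∀ w, w < w₀ → ¬(p ≤ w ∧ w < u ∧ A w = 0) := fun w hw => Nat.find_min hz hw
    have r1 : rad A B w₀ ≤ rad A B p := by
      refine NZrun h hε p w₀ hw1 ?_ (hs'' w₀ hw1 (by omega))
      intro w hw hww
      refine ⟨hs w hw (by omega), ?_⟩
      intro hAw
      exact hmin w hww ⟨hw, by omega, hAw⟩
    have r2 : rad A B (w₀+1) ≤ rad A B w₀ + 2 := GS h w₀
    have r3 : rad A B u ≤ rad A B (w₀+1) := by
      refine NZrun h hε (w₀+1) u (by omega) ?_ (hs'' u hpu hum)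
      intro w hw hwu
      refine ⟨hs w (by omega) (by omega), ?_⟩
      intro hAw
      -- uniqueness of the zero of A via linearity
      have hlin1 : ε * A w = ε * A p - ((w : ℝ) - (p : ℝ)) :=
        linA h hε p w (by omega) (fun x hx hxw => hs x hx (by omega))
      have hlin2 : ε * A w₀ = ε * A p - ((w₀ : ℝ) - (p : ℝ)) :=
        linA h hε p w₀ hw1 (fun x hx hxw => hs x hx (by omega))
      rw [hAw] at hlin1
      rw [hw3] at hlin2
      have : (w : ℝ) = (w₀ : ℝ) := by linarith
      have : w = w₀ := by exact_mod_cast this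
      omega
    linarith
  · push_neg at hz
    have : rad A B u ≤ rad A B p := by
      refine NZrun h hε p u hpu ?_ (hs'' u hpu hum)
      intro w hw hwu
      exact ⟨hs w hw (by omega), hz w hw hwu⟩
    linarith

/-- zeros of B propagate along non-exceptional steps -/
lemma ZP1 (h : Sys A B) (q r : ℕ) (hr : B r = 0)
    (hY : ∀ v, r ≤ v → v < q → ¬Yx B v) :
    ∀ w, r ≤ w → w ≤ q → B w = 0 := by
  intro w hw
  induction w, hw using Nat.le_induction with
  | base => intro _; exact hr
  | succ w hw ih =>
    intro hwq
    have hBw : B w = 0 := ih (by omega)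
    by_contra hne
    exact hY w hw (by omega) ⟨by rw [hBw]; simp, hne⟩

lemma ZP2 (h : Sys A B) (q r : ℕ) (hr : B r = 0)
    (hY : ∀ v, r ≤ v → v < q → ¬Yx B v) :
    ∀ w, r ≤ w → w < q → A w = 0 := by
  intro w hw hwq
  have h1 : B w = 0 := ZP1 h q r hr hY w hw (by omega)
  have h2 : B (w+1) = 0 := ZP1 h q r hr hY (w+1) (by omega) (by omega)
  by_contra hne
  rcases lt_or_gt_of_ne hne with hlt | hgt
  · have := h.c2 w hlt; rw [h1, h2] at this; norm_num at this
  · have := h.c1 w hgt; rw [h1, h2] at this; norm_num at this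

/-- chain: strict sign propagates along non-exceptional steps while B is nonzero -/
lemma CL (h : Sys A B) {ε : ℝ} (hε : ε = 1 ∨ ε = -1) (p q : ℕ)
    (h0 : 0 < ε * B p) (hY : ∀ u, p ≤ u → u < q → ¬Yx B u) :
    ∀ w, p ≤ w → w ≤ q → (∀ x, p < x → x ≤ w → B x ≠ 0) → 0 < ε * B w := by
  intro w hw
  induction w, hw using Nat.le_induction with
  | base => intro _ _; exact h0
  | succ w hw ih =>
    intro hwq hnz
    have h1 : 0 < ε * B w := ih (by omega) (fun x hx hxw => hnz x hx (by omega))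
    have h2 : B (w+1) ≠ 0 := hnz (w+1) (by omega) le_rfl
    have h3 : ¬Yx B w := hY w hw (by omega)
    have h4 : 0 < B w * B (w+1) := by
      by_contra hc
      push_neg at hc
      exact h3 ⟨hc, h2⟩
    exact sgn_pos hε h1 h4

/-- Interval lemma: along an interval with no exceptional steps, the radius grows at most 2. -/
lemma IL (h : Sys A B) (p q : ℕ) (hY : ∀ u, p ≤ u → u < q → ¬Yx B u) :
    ∀ u, p ≤ u → u ≤ q → rad A B u ≤ rad A B p + 2 := by
  classical
  intro u hpu huq
  have hrnn : (0:ℝ) ≤ rad A B p := rad_nonneg p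
  by_cases hBp : B p = 0
  · rcases eq_or_lt_of_le hpu with rfl | hlt
    · linarith
    · obtain ⟨w, rfl⟩ : ∃ w, u = w + 1 := ⟨u - 1, by omega⟩
      have hpw : p ≤ w := by omega
      have hAw : A w = 0 := ZP2 h q p hBp hY w hpw (by omega)
      have hBw1 : B (w+1) = 0 := ZP1 h q p hBp hY (w+1) (by omega) (by omega)
      have : |A (w+1)| ≤ 1 := by
        have := absA_succ h w
        rw [hAw] at this; simpa using this
      have hr1 : rad A B (w+1) ≤ 1 := by
        unfold rad; rw [hBw1]; simpa using this
      linarith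
  · obtain ⟨ε, hε, h0⟩ : ∃ ε : ℝ, (ε = 1 ∨ ε = -1) ∧ 0 < ε * B p := by
      rcases lt_trichotomy (B p) 0 with hh | hh | hh
      · exact ⟨-1, Or.inr rfl, by nlinarith⟩
      · exact absurd hh hBp
      · exact ⟨1, Or.inl rfl, by nlinarith⟩
    by_cases hz : ∃ w, p ≤ w ∧ w ≤ q ∧ B w = 0
    · set w₀ := Nat.find hz with hwdef
      obtain ⟨hp0, hq0, hB0⟩ := Nat.find_spec hz
      have hmin : ∀ w, w < w₀ → ¬(p ≤ w ∧ w ≤ q ∧ B w = 0) := fun w hw => Nat.find_min hz hw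
      have hpw : p < w₀ := by
        rcases eq_or_lt_of_le hp0 with heq | hlt
        · exact absurd (heq ▸ hB0) hBp
        · exact hlt
      have hstrict : ∀ w, p ≤ w → w < w₀ → 0 < ε * B w := by
        intro w hw hww
        refine CL h hε p q h0 hY w hw (by omega) ?_
        intro x hx hxw
        intro hBx
        exact hmin x (by omega) ⟨by omega, by omega, hBx⟩
      by_cases hcase : u ≤ w₀
      · exact PL1 h hε p w₀ hstrict (by rw [hB0]; simp) u hpu hcase
      · push_neg at hcase
        obtain ⟨w, rfl⟩ : ∃ w, u = w + 1 := ⟨u - 1, by omega⟩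
        have hw0w : w₀ ≤ w := by omega
        have hYsub : ∀ v, w₀ ≤ v → v < q → ¬Yx B v := fun v hv => hY v (by omega)
        have hAw : A w = 0 := ZP2 h q w₀ hB0 hYsub w hw0w (by omega)
        have hBw1 : B (w+1) = 0 := ZP1 h q w₀ hB0 hYsub (w+1) (by omega) (by omega)
        have : |A (w+1)| ≤ 1 := by
          have := absA_succ h w
          rw [hAw] at this; simpa using this
        have hr1 : rad A B (w+1) ≤ 1 := by
          unfold rad; rw [hBw1]; simpa using this
        linarith
    · push_neg at hz
      have hstrict : ∀ w, p ≤ w → w ≤ q → 0 < ε * B w := by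
        intro w hw hwq
        refine CL h hε p q h0 hY w hw hwq ?_
        intro x hx hxw
        exact hz x (by omega) (by omega)
      exact PL1 h hε p q (fun w hw hwq => hstrict w hw (by omega))
        (le_of_lt (hstrict q (le_trans hpu huq) le_rfl)) u hpu huq

-- PART 3

lemma exists_max_Y {s : ℕ} (hne : ∃ u, u < s ∧ Yx B u) :
    ∃ s', s' < s ∧ Yx B s' ∧ ∀ u, s' < u → u < s → ¬Yx B u := by
  classical
  obtain ⟨u₀, hu₀, hY₀⟩ := hne
  have hs : 1 ≤ s := by omega
  refine ⟨Nat.findGreatest (Yx B) (s-1), ?_, ?_, ?_⟩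
  · have := Nat.findGreatest_le (P := Yx B) (s-1)
    omega
  · exact Nat.findGreatest_spec (m := u₀) (by omega) hY₀
  · intro u hu hus hYu
    exact Nat.findGreatest_is_greatest hu (by omega) hYu

lemma absB_of_Yx (h : Sys A B) {s : ℕ} (hY : Yx B s) : |B (s+1)| ≤ 1 := by
  have h1 : (B (s+1))^2 ≤ (B (s+1) - B s)^2 := by nlinarith [hY.1, sq_nonneg (B s)]
  have h2 : |B (s+1)| ≤ |B (s+1) - B s| := by
    have := Real.sqrt_le_sqrt h1
    rwa [Real.sqrt_sq_eq_abs, Real.sqrt_sq_eq_abs] at this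
  linarith [h.bd s]

lemma eps_exists {x : ℝ} (hx : x ≠ 0) : ∃ ε : ℝ, (ε = 1 ∨ ε = -1) ∧ 0 < ε * x := by
  rcases lt_trichotomy x 0 with hh | hh | hh
  · exact ⟨-1, Or.inr rfl, by nlinarith⟩
  · exact absurd hh hx
  · exact ⟨1, Or.inl rfl, by nlinarith⟩

lemma abs_eps_mul {ε x : ℝ} (hε : ε = 1 ∨ ε = -1) : |ε * x| = |x| := by
  rcases hε with rfl | rfl <;> simp

/-- F2: at an exceptional step following a previous exceptional step,
`|A (s+1)|` is bounded by the gap plus one. -/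
lemma F2 (h : Sys A B) {s' s : ℕ} (hss : s' < s) (hY' : Yx B s') (hYs : Yx B s)
    (hbet : ∀ u, s' < u → u < s → ¬Yx B u) :
    |A (s+1)| ≤ ((s:ℝ) - (s':ℝ)) + 1 := by
  classical
  have hgap1 : (1:ℝ) ≤ (s:ℝ) - (s':ℝ) := by
    have : (s':ℝ) + 1 ≤ (s:ℝ) := by exact_mod_cast hss
    linarith
  have hBn' : B (s'+1) ≠ 0 := hY'.2
  obtain ⟨ε, hε, h0⟩ := eps_exists hBn'
  have hYint : ∀ u, s'+1 ≤ u → u < s → ¬Yx B u := fun u hu => hbet u (by omega)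
  -- e1 : -1 ≤ ε * A (s'+1)
  have he1 : -1 ≤ ε * A (s'+1) := by
    have hs'le : ε * B s' ≤ 0 := sgn_nonpos hε h0 hY'.1
    have hcdpos : 0 < ε * (B (s'+1) - B s') := by
      have hh : ε * (B (s'+1) - B s') = ε * B (s'+1) - ε * B s' := by ring
      linarith
    have hAs' : 0 ≤ ε * A s' := by
      by_contra hneg
      push_neg at hneg
      have h2 : 0 < (-ε) * A s' := by nlinarith
      have hεneg : (-ε = 1 ∨ -ε = -1) := by
        rcases hε with rfl | rfl
        · exact Or.inr (by norm_num)
        · exact Or.inl (by norm_num)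
      have := cA h hεneg h2
      rw [this] at hcdpos
      rcases hε with rfl | rfl <;> nlinarith
    rcases h.ad s' with had | had <;> rcases hε with rfl | rfl <;> rw [had] <;> nlinarith
  by_cases hz : ∃ w, s'+1 ≤ w ∧ w ≤ s ∧ B w = 0
  · set w₀ := Nat.find hz with hwdef
    obtain ⟨hp0, hq0, hB0⟩ := Nat.find_spec hz
    have hmin : ∀ w, w < w₀ → ¬(s'+1 ≤ w ∧ w ≤ s ∧ B w = 0) := fun w hw => Nat.find_min hz hw
    have hn'w : s'+1 < w₀ := by
      rcases eq_or_lt_of_le hp0 with heq | hlt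
      · exact absurd (heq ▸ hB0) hBn'
      · exact hlt
    have hstrict : ∀ w, s'+1 ≤ w → w < w₀ → 0 < ε * B w := by
      intro w hw hww
      refine CL h hε (s'+1) s h0 hYint w hw (by omega) ?_
      intro x hx hxw hBx
      exact hmin x (by omega) ⟨by omega, by omega, hBx⟩
    by_cases hws : w₀ = s
    · -- B s = 0, strict sign on [s'+1, s)
      have hB0s : B s = 0 := hws ▸ hB0
      obtain ⟨r, rfl⟩ : ∃ r, s = r + 1 := ⟨s - 1, by omega⟩
      have hrn' : s' + 1 ≤ r := by omega
      have hBr : 0 < ε * B r := hstrict r hrn' (by omega)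
      have hcneg : ε * (B (r+1) - B r) < 0 := by
        rw [hB0s]; nlinarith
      have he2 : ε * A r ≤ 0 := cA' h hε hcneg
      have hlinhyp : ∀ w, s'+1 ≤ w → w < r → 0 < ε * B w :=
        fun w hw hwr => hstrict w hw (by omega)
      have l1 : ε * A r = ε * A (s'+1) - ((r:ℝ) - ((s'+1:ℕ):ℝ)) :=
        linA h hε (s'+1) r hrn' hlinhyp
      have l2 : ε * A (r+1) = ε * A (s'+1) - (((r+1:ℕ):ℝ) - ((s'+1:ℕ):ℝ)) :=
        linA h hε (s'+1) (r+1) (by omega) (fun w hw hwr => hstrict w hw (by omega))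
      -- |A (r+1)| ≤ (r+1) - s'
      have habs : |A (r+1)| ≤ ((r:ℝ)+1) - (s':ℝ) := by
        rw [← abs_eps_mul (x := A (r+1)) hε]
        rw [abs_le]
        constructor
        · push_cast at l1 l2 ⊢; linarith
        · push_cast at l1 l2 ⊢; linarith
      have := absA_succ h (r+1)
      push_cast at habs ⊢
      linarith
    · -- w₀ < s : B is eventually identically 0 before s, A (s-1) = 0
      have hw0s : w₀ < s := lt_of_le_of_ne hq0 hws
      obtain ⟨r, rfl⟩ : ∃ r, s = r + 1 := ⟨s - 1, by omega⟩
      have hzr : ∀ v, w₀ ≤ v → v < r+1 → ¬Yx B v := by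
        intro v hv hv'
        exact hYint v (by omega) hv'
      have hAr : A r = 0 := ZP2 h (r+1) w₀ hB0 hzr r (by omega) (by omega)
      have h1 : |A (r+1)| ≤ 1 := by
        have := absA_succ h r
        rw [hAr] at this; simpa using this
      have h2 := absA_succ h (r+1)
      push_cast at hgap1 ⊢
      linarith
  · -- no zeros: strict sign on all [s'+1, s]
    push_neg at hz
    have hstrict : ∀ w, s'+1 ≤ w → w ≤ s → 0 < ε * B w := by
      intro w hw hwq
      refine CL h hε (s'+1) s h0 hYint w hw hwq ?_
      intro x hx hxw
      exact hz x (by omega) (by omega)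
    have hBs : 0 < ε * B s := hstrict s (by omega) le_rfl
    have hBs1 : ε * B (s+1) ≤ 0 := by
      refine sgn_nonpos hε hBs ?_
      rw [mul_comm]; exact hYs.1
    have he2 : ε * A s ≤ 0 := by
      refine cA' h hε ?_
      have : ε * (B (s+1) - B s) = ε * B (s+1) - ε * B s := by ring
      linarith
    have hstepA : A (s+1) = A s - ε := sA h hε hBs
    have l1 : ε * A s = ε * A (s'+1) - ((s:ℝ) - ((s'+1:ℕ):ℝ)) :=
      linA h hε (s'+1) s (by omega) (fun w hw hws => hstrict w hw (by omega))
    have heps2 : ε * ε = 1 := by rcases hε with rfl | rfl <;> norm_num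
    have l2 : ε * A (s+1) = ε * A s - 1 := by
      rw [hstepA]; nlinarith
    have habs : |A (s+1)| ≤ ((s:ℝ) - (s':ℝ)) + 1 := by
      rw [← abs_eps_mul (x := A (s+1)) hε]
      rw [abs_le]
      constructor
      · push_cast at l1 l2 ⊢; linarith
      · push_cast at l1 l2 ⊢; linarith
    exact habs


/-- Main lemma: at exceptional steps, `rad² ≤ 24·time`. -/
lemma M (h : Sys A B) : ∀ s, Yx B s → (rad A B (s+1))^2 ≤ 24 * ((s:ℝ)+1) := by
  intro s
  induction s using Nat.strong_induction_on with
  | _ s IH =>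
    intro hYs
    have habsB : |B (s+1)| ≤ 1 := absB_of_Yx h hYs
    by_cases hprev : ∃ u, u < s ∧ Yx B u
    · obtain ⟨s', hs's, hYs', hmax⟩ := exists_max_Y hprev
      have hIH : (rad A B (s'+1))^2 ≤ 24 * ((s':ℝ)+1) := IH s' hs's hYs'
      -- F1 : rad (s+1) ≤ rad (s'+1) + 4
      have hIL : rad A B s ≤ rad A B (s'+1) + 2 :=
        IL h (s'+1) s (fun u hu hu' => hmax u (by omega) hu') s (by omega) le_rfl
      have hGS : rad A B (s+1) ≤ rad A B s + 2 := GS h s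
      -- F2 : rad (s+1) ≤ (s - s') + 2
      have hF2 : |A (s+1)| ≤ ((s:ℝ) - (s':ℝ)) + 1 := F2 h hs's hYs' hYs hmax
      have hrad2 : rad A B (s+1) ≤ ((s:ℝ) - (s':ℝ)) + 2 := by
        unfold rad; linarith
      set g : ℝ := (s:ℝ) - (s':ℝ) with hgdef
      have hg1 : (1:ℝ) ≤ g := by
        have : (s':ℝ) + 1 ≤ (s:ℝ) := by exact_mod_cast hs's
        simp only [hgdef]; linarith
      have hR0 : 0 ≤ rad A B (s+1) := rad_nonneg (s+1)
      have hR'0 : 0 ≤ rad A B (s'+1) := rad_nonneg (s'+1)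
      have hX0 : (0:ℝ) ≤ 24 * ((s':ℝ)+1) := by positivity
      have hcastid : 24 * ((s:ℝ)+1) = 24 * ((s':ℝ)+1) + 24 * g := by
        simp only [hgdef]; ring
      by_cases hcase : g + 2 ≤ Real.sqrt (24 * ((s':ℝ)+1))
      · have h1 : (rad A B (s+1))^2 ≤ (g+2)^2 := by
          apply pow_le_pow_left₀ hR0 hrad2
        have h2 : (g+2)^2 ≤ (Real.sqrt (24 * ((s':ℝ)+1)))^2 :=
          pow_le_pow_left₀ (by linarith) hcase 2
        rw [Real.sq_sqrt hX0] at h2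
        nlinarith
      · push_neg at hcase
        have hR'le : rad A B (s'+1) ≤ Real.sqrt (24 * ((s':ℝ)+1)) := by
          have h1 : rad A B (s'+1) = Real.sqrt ((rad A B (s'+1))^2) :=
            (Real.sqrt_sq hR'0).symm
          rw [h1]
          exact Real.sqrt_le_sqrt hIH
        have hsq : (Real.sqrt (24 * ((s':ℝ)+1)))^2 = 24 * ((s':ℝ)+1) := Real.sq_sqrt hX0
        have hsnn : 0 ≤ Real.sqrt (24 * ((s':ℝ)+1)) := Real.sqrt_nonneg _
        rcases (by omega : s = s' + 1 ∨ s' + 2 ≤ s) with heq | hge2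
        · -- g = 1 : contradiction with hcase
          exfalso
          have hg1' : g = 1 := by simp only [hgdef, heq]; push_cast; ring
          have h9 : (9:ℝ) ≤ 24 * ((s':ℝ)+1) := by
            have : (0:ℝ) ≤ (s':ℝ) := Nat.cast_nonneg _
            linarith
          have h3 : (3:ℝ) ≤ Real.sqrt (24 * ((s':ℝ)+1)) := by
            rw [show (3:ℝ) = Real.sqrt 9 by
              rw [show (9:ℝ) = 3^2 by norm_num, Real.sqrt_sq (by norm_num)]]
            exact Real.sqrt_le_sqrt h9
          rw [hg1'] at hcase
          linarith
        · have hg2 : (2:ℝ) ≤ g := by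
            have : (s':ℝ) + 2 ≤ (s:ℝ) := by exact_mod_cast hge2
            simp only [hgdef]; linarith
          have hRle : rad A B (s+1) ≤ Real.sqrt (24 * ((s':ℝ)+1)) + 4 := by linarith
          have h1 : (rad A B (s+1))^2 ≤ (Real.sqrt (24 * ((s':ℝ)+1)) + 4)^2 :=
            pow_le_pow_left₀ hR0 hRle 2
          nlinarith
    · -- no previous exceptional step
      push_neg at hprev
      have hY0 : ∀ v, 0 ≤ v → v < s → ¬Yx B v := fun v _ hv => hprev v hv
      rcases Nat.eq_zero_or_pos s with rfl | hs
      · have h1 : |A 1| ≤ 1 := by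
          have := absA_succ h 0
          rw [h.a0] at this; simpa using this
        have : rad A B 1 ≤ 2 := by unfold rad; linarith
        have h0 : 0 ≤ rad A B 1 := rad_nonneg 1
        nlinarith
      · obtain ⟨r, rfl⟩ : ∃ r, s = r + 1 := ⟨s - 1, by omega⟩
        have hAr : A r = 0 := ZP2 h (r+1) 0 h.b0 hY0 r (by omega) (by omega)
        have h1 : |A (r+1)| ≤ 1 := by
          have := absA_succ h r
          rw [hAr] at this; simpa using this
        have h2 : |A (r+1+1)| ≤ 2 := by
          have := absA_succ h (r+1); linarith
        have h3 : rad A B (r+1+1) ≤ 3 := by unfold rad; linarith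
        have h0 : 0 ≤ rad A B (r+1+1) := rad_nonneg _
        have : (0:ℝ) ≤ (r:ℝ) := Nat.cast_nonneg _
        push_cast
        nlinarith

/-- Global bound on the radius. -/
lemma GB (h : Sys A B) (T : ℕ) (hT : 1 ≤ T) :
    rad A B T ≤ Real.sqrt (24 * (T:ℝ)) + 2 := by
  classical
  have hsnn : 0 ≤ Real.sqrt (24 * (T:ℝ)) := Real.sqrt_nonneg _
  by_cases hex : ∃ u, u < T ∧ Yx B u
  · obtain ⟨s, hsT, hYs, hmax⟩ := exists_max_Y hex
    have hM := M h s hYs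
    have hX0 : (0:ℝ) ≤ 24 * ((s:ℝ)+1) := by positivity
    have h1 : rad A B (s+1) ≤ Real.sqrt (24 * ((s:ℝ)+1)) := by
      have heq : rad A B (s+1) = Real.sqrt ((rad A B (s+1))^2) :=
        (Real.sqrt_sq (rad_nonneg _)).symm
      rw [heq]
      exact Real.sqrt_le_sqrt hM
    have h2 : rad A B T ≤ rad A B (s+1) + 2 :=
      IL h (s+1) T (fun u hu hu' => hmax u (by omega) hu') T (by omega) le_rfl
    have h3 : Real.sqrt (24 * ((s:ℝ)+1)) ≤ Real.sqrt (24 * (T:ℝ)) := by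
      apply Real.sqrt_le_sqrt
      have : (s:ℝ) + 1 ≤ (T:ℝ) := by exact_mod_cast hsT
      linarith
    linarith
  · push_neg at hex
    obtain ⟨r, rfl⟩ : ∃ r, T = r + 1 := ⟨T - 1, by omega⟩
    have hY0 : ∀ v, 0 ≤ v → v < r + 1 → ¬Yx B v := fun v _ hv => hex v hv
    have hAr : A r = 0 := ZP2 h (r+1) 0 h.b0 hY0 r (by omega) (by omega)
    have hBr1 : B (r+1) = 0 := ZP1 h (r+1) 0 h.b0 hY0 (r+1) (by omega) le_rfl
    have h1 : |A (r+1)| ≤ 1 := by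
      have := absA_succ h r
      rw [hAr] at this; simpa using this
    have : rad A B (r+1) ≤ 1 := by
      unfold rad; rw [hBr1]; simpa using h1
    linarith

/-- upper bound for the per-round gain -/
lemma LU (h : Sys A B) (t : ℕ) :
    -((A (t+1) - A t) * (B (t+1) - B t)) ≤ |B (t+1)| - |B t| := by
  rcases lt_trichotomy (B t) 0 with hB | hB | hB
  · have hA : A (t+1) = A t + 1 := h.c4 t hB
    rw [hA, abs_of_neg hB]
    have : A t + 1 - A t = 1 := by ring
    rw [this, one_mul]
    have := neg_abs_le (B (t+1))
    linarith
  · have hd : |A (t+1) - A t| = 1 := absAd_eq_one h t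
    have h1 : -((A (t+1) - A t) * (B (t+1) - B t)) ≤ |(A (t+1) - A t) * (B (t+1) - B t)| := by
      rw [← abs_neg]; exact le_abs_self _
    rw [abs_mul, hd, one_mul, hB, sub_zero] at h1
    rw [hB, abs_zero]
    linarith
  · have hA : A (t+1) = A t - 1 := h.c3 t hB
    rw [hA, abs_of_pos hB]
    have h2 : A t - 1 - A t = -1 := by ring
    rw [h2]
    have := le_abs_self (B (t+1))
    nlinarith
  
/-- lower bound for the per-round gain -/
lemma LL (h : Sys A B) (t : ℕ) :
    |A t| - |A (t+1)| ≤ -((A (t+1) - A t) * (B (t+1) - B t)) := by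
  rcases lt_trichotomy (A t) 0 with hA | hA | hA
  · have hc : B (t+1) - B t = -1 := h.c2 t hA
    rw [hc, abs_of_neg hA]
    have := neg_abs_le (A (t+1))
    nlinarith
  · have hd : |A (t+1) - A t| = 1 := absAd_eq_one h t
    rw [hA, sub_zero] at hd
    have h1 : -|(A (t+1) - A t) * (B (t+1) - B t)| ≤ -((A (t+1) - A t) * (B (t+1) - B t)) := by
      have := le_abs_self ((A (t+1) - A t) * (B (t+1) - B t))
      linarith [neg_abs_le ((A (t+1) - A t) * (B (t+1) - B t))]
    rw [abs_mul] at h1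
    rw [hA, sub_zero, abs_zero] at *
    rw [hd, one_mul] at h1
    have := h.bd t
    linarith
  · have hc : B (t+1) - B t = 1 := h.c1 t hA
    rw [hc, abs_of_pos hA]
    have := le_abs_self (A (t+1))
    nlinarith
end FPaux

-- PART 6 : concrete glue

lemma alpha_zero (b : ℕ → Choice) : alphaFP b 0 = 0 := by
  simp [alphaFP]

lemma beta_zero (vB : ℝ → ℝ) (a : ℕ → ℝ) : betaFP vB a 0 = 0 := by
  simp [betaFP]

lemma alpha_succ (b : ℕ → Choice) (t : ℕ) :
    alphaFP b (t+1) = alphaFP b t + (if b (t+1) = Choice.R then (1:ℝ) else -1) := by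
  unfold alphaFP
  exact Finset.sum_Icc_succ_top (by omega) _

lemma beta_succ (vB : ℝ → ℝ) (a : ℕ → ℝ) (t : ℕ) :
    betaFP vB a (t+1) = betaFP vB a t + (2 * cumul vB (a (t+1)) - 1) := by
  unfold betaFP
  exact Finset.sum_Icc_succ_top (by omega) _

lemma cumul_bounds {δ Δ : ℝ} {vB : ℝ → ℝ} (hδ : 0 < δ) (hB : IsDensity δ Δ vB)
    {x : ℝ} (hx : x ∈ Set.Icc (0:ℝ) 1) : 0 ≤ cumul vB x ∧ cumul vB x ≤ 1 := by
  obtain ⟨hint, hbound, hone⟩ := hB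
  obtain ⟨hx0, hx1⟩ := hx
  have hsub1 : Set.uIcc 0 x ⊆ Set.uIcc (0:ℝ) 1 := by
    rw [Set.uIcc_of_le hx0, Set.uIcc_of_le (by norm_num : (0:ℝ) ≤ 1)]
    exact Set.Icc_subset_Icc le_rfl hx1
  have hsub2 : Set.uIcc x 1 ⊆ Set.uIcc (0:ℝ) 1 := by
    rw [Set.uIcc_of_le hx1, Set.uIcc_of_le (by norm_num : (0:ℝ) ≤ 1)]
    exact Set.Icc_subset_Icc hx0 le_rfl
  have hi1 : IntervalIntegrable vB volume 0 x := hint.mono_set hsub1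
  have hi2 : IntervalIntegrable vB volume x 1 := hint.mono_set hsub2
  have hnn : 0 ≤ cumul vB x := by
    apply intervalIntegral.integral_nonneg hx0
    intro u hu
    exact le_trans hδ.le (hbound u ⟨hu.1, le_trans hu.2 hx1⟩).1
  refine ⟨hnn, ?_⟩
  have hsplit : (∫ y in (0:ℝ)..x, vB y) + ∫ y in x..1, vB y = ∫ y in (0:ℝ)..1, vB y :=
    intervalIntegral.integral_add_adjacent_intervals hi1 hi2
  have h2nn : 0 ≤ ∫ y in x..1, vB y := by
    apply intervalIntegral.integral_nonneg hx1
    intro u hu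
    exact le_trans hδ.le (hbound u ⟨le_trans hx0 hu.1, hu.2⟩).1
  rw [hone] at hsplit
  unfold cumul
  linarith


/-- Under fictitious play, for `T ≥ 5` Bob's total payoff satisfies
`T/2 − √(10T) ≤ Σ u_B^t ≤ T/2 + √(10T)`. -/

theorem bob_total_payoff_bounds
    (δ Δ : ℝ) (hδ : 0 < δ) (hδΔ : δ ≤ Δ)
    (vA vB : ℝ → ℝ) (hA : IsDensity δ Δ vA) (hB : IsDensity δ Δ vB)
    (a : ℕ → ℝ) (b : ℕ → Choice)
    (ha : ∀ t : ℕ, 1 ≤ t → a t ∈ Set.Icc (0:ℝ) 1)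
    (hfp : IsFictitiousPlay vB a b)
    (T : ℕ) (hT : 5 ≤ T) :
    (T : ℝ) / 2 - Real.sqrt (10 * T) ≤ ∑ t ∈ Finset.Icc 1 T, uB vB a b t ∧
    ∑ t ∈ Finset.Icc 1 T, uB vB a b t ≤ (T : ℝ) / 2 + Real.sqrt (10 * T) := by
  set A : ℕ → ℝ := alphaFP b with hAdef
  set B : ℕ → ℝ := betaFP vB a with hBdef
  have hcum1 : cumul vB 1 = 1 := hB.2.2
  have hcum0 : cumul vB 0 = 0 := intervalIntegral.integral_same
  have hS : FPaux.Sys A B := by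
    constructor
    · exact alpha_zero b
    · exact beta_zero vB a
    · intro t
      rw [hAdef]
      rw [alpha_succ b t]
      by_cases hb : b (t+1) = Choice.R
      · left; rw [if_pos hb]
      · right; rw [if_neg hb]; ring
    · intro t
      rw [hBdef, beta_succ vB a t]
      have := cumul_bounds hδ hB (ha (t+1) (by omega))
      rw [abs_le]
      constructor <;> [skip; skip] <;> · simp only [add_sub_cancel_left]; linarith [this.1, this.2]
    · intro t hpos
      rw [hBdef, beta_succ vB a t]
      have h1 : a (t+1) = 1 := (hfp t).1 hpos
      rw [h1, hcum1]
      ring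
    · intro t hneg
      rw [hBdef, beta_succ vB a t]
      have h1 : a (t+1) = 0 := (hfp t).2.1 hneg
      rw [h1, hcum0]
      ring
    · intro t hpos
      rw [hAdef, alpha_succ b t]
      have h1 : b (t+1) = Choice.L := (hfp t).2.2.1 hpos
      rw [h1, if_neg (fun hh => Choice.noConfusion hh)]
      ring
    · intro t hneg
      rw [hAdef, alpha_succ b t]
      have h1 : b (t+1) = Choice.R := (hfp t).2.2.2 hneg
      rw [h1, if_pos rfl]
  -- identity : 2·u_B(t+1) − 1 = −(ΔA·ΔB)
  have hid : ∀ t : ℕ, 2 * uB vB a b (t+1) - 1 = -((A (t+1) - A t) * (B (t+1) - B t)) := by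
    intro t
    have hAd : A (t+1) - A t = (if b (t+1) = Choice.R then (1:ℝ) else -1) := by
      rw [hAdef, alpha_succ b t]; ring
    have hBd : B (t+1) - B t = 2 * cumul vB (a (t+1)) - 1 := by
      rw [hBdef, beta_succ vB a t]; ring
    rw [hAd, hBd]
    cases hb : b (t+1) <;> simp [uB, hb] <;> ring
  -- telescoping sum bounds
  have hsum : ∀ N : ℕ, -|A N| ≤ 2 * (∑ t ∈ Finset.Icc 1 N, uB vB a b t) - N ∧
      2 * (∑ t ∈ Finset.Icc 1 N, uB vB a b t) - N ≤ |B N| := by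
    intro N
    induction N with
    | zero =>
      simp [hS.a0, hS.b0]
    | succ N ih =>
      have hrec : ∑ t ∈ Finset.Icc 1 (N+1), uB vB a b t
          = (∑ t ∈ Finset.Icc 1 N, uB vB a b t) + uB vB a b (N+1) :=
        Finset.sum_Icc_succ_top (by omega) _
      have hU := FPaux.LU hS N
      have hL := FPaux.LL hS N
      have hidN := hid N
      constructor
      · rw [hrec]; push_cast; linarith [ih.1]
      · rw [hrec]; push_cast; linarith [ih.2]
  -- radius bound
  have hrad : FPaux.rad A B T ≤ Real.sqrt (24 * (T:ℝ)) + 2 := FPaux.GB hS T (by omega)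
  have hAle : |A T| ≤ Real.sqrt (24 * (T:ℝ)) + 2 := by
    have : FPaux.rad A B T = |A T| + |B T| := rfl
    have h2 := abs_nonneg (B T)
    linarith
  have hBle : |B T| ≤ Real.sqrt (24 * (T:ℝ)) + 2 := by
    have : FPaux.rad A B T = |A T| + |B T| := rfl
    have h2 := abs_nonneg (A T)
    linarith
  -- numeric : sqrt(24 T) + 2 ≤ 2 sqrt(10 T)
  have hT5 : (5:ℝ) ≤ (T:ℝ) := by exact_mod_cast hT
  have hkey : Real.sqrt (24 * (T:ℝ)) + 2 ≤ 2 * Real.sqrt (10 * (T:ℝ)) := by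
    have h24 : Real.sqrt (24 * (T:ℝ)) ≤ 4 * (T:ℝ) - 1 := by
      have h1 : (24 * (T:ℝ)) ≤ (4 * (T:ℝ) - 1)^2 := by nlinarith
      calc Real.sqrt (24 * (T:ℝ)) ≤ Real.sqrt ((4 * (T:ℝ) - 1)^2) := Real.sqrt_le_sqrt h1
        _ = 4 * (T:ℝ) - 1 := Real.sqrt_sq (by linarith)
    have hs0 : 0 ≤ Real.sqrt (24 * (T:ℝ)) := Real.sqrt_nonneg _
    have hsq : (Real.sqrt (24 * (T:ℝ)))^2 = 24 * (T:ℝ) := Real.sq_sqrt (by positivity)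
    have haux : (Real.sqrt (24 * (T:ℝ)) + 2)^2 ≤ 40 * (T:ℝ) := by nlinarith
    have h40 : Real.sqrt (24 * (T:ℝ)) + 2 ≤ Real.sqrt (40 * (T:ℝ)) := by
      calc Real.sqrt (24 * (T:ℝ)) + 2 = Real.sqrt ((Real.sqrt (24 * (T:ℝ)) + 2)^2) :=
            (Real.sqrt_sq (by positivity)).symm
        _ ≤ Real.sqrt (40 * (T:ℝ)) := Real.sqrt_le_sqrt haux
    have h2 : Real.sqrt (40 * (T:ℝ)) = 2 * Real.sqrt (10 * (T:ℝ)) := by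
      rw [show (40:ℝ) * (T:ℝ) = 2^2 * (10 * (T:ℝ)) by ring,
        Real.sqrt_mul (by norm_num) , Real.sqrt_sq (by norm_num)]
    linarith
  obtain ⟨hlo, hhi⟩ := hsum T
  constructor
  · nlinarith [abs_nonneg (A T), neg_abs_le (A T)]
  · nlinarith [abs_nonneg (B T)]
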